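/- Uniqueness of the semi-parallelogram point: in a metric space where any two points of a convex ball B are joined by a unique midpoint, if X ∈ B satisfies d²(X,C) ≥ (d²(A,C)+d²(B,C))/2 − d²(A,B)/4 for all C ∈ B, then X is the midpoint of A and B. -/
import Mathlib


/-- Uniqueness of the semi-parallelogram point: in a convex ball `B` of a metric space in
which `Mid` is the unique midpoint of `A` and `B`, any `X ∈ B` satisfying
`d²(X,C) ≥ (d²(A,C)+d²(B,C))/2 − d²(A,B)/4` for all `C ∈ B` equals `Mid`. -/
theorem semi_parallelogram_point_unique {M : Type*} [MetricSpace M] (B : Set M)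
    (A B' Mid X : M) (hA : A ∈ B) (hB : B' ∈ B) (hMid : Mid ∈ B) (hX : X ∈ B)
    (hMA : dist A Mid = dist A B' / 2) (hMB : dist B' Mid = dist A B' / 2)
    (huniq : ∀ Y ∈ B, dist A Y = dist A B' / 2 → dist B' Y = dist A B' / 2 → Y = Mid)
    (hspl : ∀ C ∈ B, dist X C ^ 2 ≥
      (dist A C ^ 2 + dist B' C ^ 2) / 2 - dist A B' ^ 2 / 4) :
    X = Mid := by
  have h := hspl X hX
  simp only [dist_self] at h
  have htri : dist A B' ≤ dist A X + dist B' X := by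
    rw [dist_comm B' X]; exact dist_triangle A X B'
  have ha : dist A X = dist A B' / 2 := by
    nlinarith [sq_nonneg (dist A X - dist B' X),
      mul_nonneg (sub_nonneg.2 htri)
        (by positivity : (0:ℝ) ≤ dist A X + dist B' X + dist A B'),
      dist_nonneg (x := A) (y := X), dist_nonneg (x := B') (y := X),
      dist_nonneg (x := A) (y := B'),
      sq_nonneg (2 * dist A X - dist A B'), sq_nonneg (2 * dist B' X - dist A B')]
  have hb : dist B' X = dist A B' / 2 := by
    nlinarith [sq_nonneg (dist A X - dist B' X),
      mul_nonneg (sub_nonneg.2 htri)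
        (by positivity : (0:ℝ) ≤ dist A X + dist B' X + dist A B'),
      dist_nonneg (x := A) (y := X), dist_nonneg (x := B') (y := X),
      dist_nonneg (x := A) (y := B'),
      sq_nonneg (2 * dist A X - dist A B'), sq_nonneg (2 * dist B' X - dist A B')]
  exact huniq X hX ha hb
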